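/- Consider the random exchange process R_n = max(R_{n-1} - 1, eta_n) with i.i.d. innovations eta_n, started at R_0 = x, and the hitting time T = inf{n >= 1 : R_n <= x_0}, where P(eta_1 <= x_0) P(eta_1 > x_0) > 0 and E[eta_1^+] < infinity. Then for x in (x_0 + n, x_0 + n + 1], n >= 0, E_x[T] = (1 + sum_{j=1}^{n} prod_{k=0}^{j-1} P(eta_1 <= x_0 + k)) / prod_{k=0}^{infty} P(eta_1 <= x_0 + k). -/

import Mathlib

open MeasureTheory Filter ProbabilityTheory

section REaux

variable {Ω : Type*} [MeasurableSpace Ω]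

/-- Event: for every level `i` with `a < i ≤ m`, there is a witness `j` with `b ≤ j < i`
and `eta j > x0 + (i - 1 - j)`. -/
def REDset (eta : ℕ → Ω → ℝ) (x0 : ℝ) (b a m : ℕ) : Set Ω :=
  {ω | ∀ i, a < i → i ≤ m → ∃ j, b ≤ j ∧ j < i ∧ x0 + ((i : ℝ) - 1 - (j : ℝ)) < eta j ω}

/-- Event: all values `eta j` for `b ≤ j < i` are small. -/
def REBset (eta : ℕ → Ω → ℝ) (x0 : ℝ) (b i : ℕ) : Set Ω :=
  {ω | ∀ j, b ≤ j → j < i → eta j ω ≤ x0 + ((i : ℝ) - 1 - (j : ℝ))}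

/-- The pattern of `REDset i i m` as a subset of `Fin (m - i) → ℝ`. -/
def REUpat (x0 : ℝ) (s : ℕ) : Set (Fin s → ℝ) :=
  {y | ∀ i, 0 < i → i ≤ s →
    ∃ j : Fin s, (j : ℕ) < i ∧ x0 + ((i : ℝ) - 1 - ((j : ℕ) : ℝ)) < y j}

lemma REDset_measurable (eta : ℕ → Ω → ℝ) (hmeas : ∀ n, Measurable (eta n))
    (x0 : ℝ) (b a m : ℕ) : MeasurableSet (REDset eta x0 b a m) := by
  have : REDset eta x0 b a m =
      ⋂ i, ⋂ (_ : a < i ∧ i ≤ m), ⋃ j, ⋃ (_ : b ≤ j ∧ j < i),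
        {ω | x0 + ((i : ℝ) - 1 - (j : ℝ)) < eta j ω} := by
    ext ω
    simp only [REDset, Set.mem_setOf_eq, Set.mem_iInter, Set.mem_iUnion, Set.mem_setOf_eq]
    constructor
    · rintro h i ⟨h1, h2⟩
      obtain ⟨j, hj1, hj2, hj3⟩ := h i h1 h2
      exact ⟨j, ⟨hj1, hj2⟩, hj3⟩
    · rintro h i h1 h2
      obtain ⟨j, ⟨hj1, hj2⟩, hj3⟩ := h i ⟨h1, h2⟩
      exact ⟨j, hj1, hj2, hj3⟩
  rw [this]
  exact MeasurableSet.iInter fun i => MeasurableSet.iInter fun _ => MeasurableSet.iUnion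
    fun j => MeasurableSet.iUnion fun _ => measurableSet_lt measurable_const (hmeas j)

lemma REBset_measurable (eta : ℕ → Ω → ℝ) (hmeas : ∀ n, Measurable (eta n))
    (x0 : ℝ) (b i : ℕ) : MeasurableSet (REBset eta x0 b i) := by
  have : REBset eta x0 b i =
      ⋂ j, ⋂ (_ : b ≤ j ∧ j < i), {ω | eta j ω ≤ x0 + ((i : ℝ) - 1 - (j : ℝ))} := by
    ext ω
    simp only [REBset, Set.mem_setOf_eq, Set.mem_iInter]
    exact ⟨fun h j hj => h j hj.1 hj.2, fun h j h1 h2 => h j ⟨h1, h2⟩⟩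
  rw [this]
  exact MeasurableSet.iInter fun j => MeasurableSet.iInter fun _ =>
    measurableSet_le (hmeas j) measurable_const

lemma REUpat_measurable (x0 : ℝ) (s : ℕ) : MeasurableSet (REUpat x0 s) := by
  have : REUpat x0 s =
      ⋂ i, ⋂ (_ : 0 < i ∧ i ≤ s), ⋃ j : Fin s, ⋃ (_ : (j : ℕ) < i),
        {y : Fin s → ℝ | x0 + ((i : ℝ) - 1 - ((j : ℕ) : ℝ)) < y j} := by
    ext y
    simp only [REUpat, Set.mem_setOf_eq, Set.mem_iInter, Set.mem_iUnion, Set.mem_setOf_eq]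
    constructor
    · rintro h i ⟨h1, h2⟩
      obtain ⟨j, hj1, hj2⟩ := h i h1 h2
      exact ⟨j, hj1, hj2⟩
    · rintro h i h1 h2
      obtain ⟨j, hj1, hj2⟩ := h i ⟨h1, h2⟩
      exact ⟨j, hj1, hj2⟩
  rw [this]
  exact MeasurableSet.iInter fun i => MeasurableSet.iInter fun _ => MeasurableSet.iUnion
    fun j => MeasurableSet.iUnion fun _ =>
      measurableSet_lt measurable_const (measurable_pi_apply j)

variable (μ : Measure Ω) [IsProbabilityMeasure μ]

/-- The law of any window `(eta b, ..., eta (b+s-1))` is the product of the common law. -/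
lemma REmap (eta : ℕ → Ω → ℝ) (hmeas : ∀ n, Measurable (eta n))
    (hindep : iIndepFun eta μ)
    (hident : ∀ n, IdentDistrib (eta n) (eta 0) μ μ) (b s : ℕ) :
    Measure.map (fun ω (j : Fin s) => eta (b + (j : ℕ)) ω) μ
      = Measure.pi (fun _ : Fin s => Measure.map (eta 0) μ) := by
  haveI : IsProbabilityMeasure (Measure.map (eta 0) μ) :=
    Measure.isProbabilityMeasure_map (hmeas 0).aemeasurable
  have hW : Measurable (fun ω (j : Fin s) => eta (b + (j : ℕ)) ω) :=
    measurable_pi_lambda _ fun j => hmeas _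
  have hν : ∀ (k : ℕ) (C : Set ℝ), MeasurableSet C →
      μ (eta k ⁻¹' C) = Measure.map (eta 0) μ C := by
    intro k C hC
    rw [← (hident k).map_eq, Measure.map_apply (hmeas k) hC]
  refine (Measure.pi_eq fun B hB => ?_).symm
  classical
  set B'' : ℕ → Set ℝ := fun t => if h : t < s then B ⟨t, h⟩ else Set.univ with hB''
  have hB''meas : ∀ t, MeasurableSet (B'' t) := by
    intro t
    rw [hB'']
    dsimp only
    split
    · exact hB _
    · exact MeasurableSet.univ
  rw [Measure.map_apply hW (MeasurableSet.univ_pi hB)]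
  have hpre : (fun ω (j : Fin s) => eta (b + (j : ℕ)) ω) ⁻¹' (Set.pi Set.univ B)
      = ⋂ k ∈ Finset.Ico b (b + s), eta k ⁻¹' (B'' (k - b)) := by
    ext ω
    simp only [Set.mem_preimage, Set.mem_pi, Set.mem_univ, forall_true_left, Set.mem_iInter,
      Finset.mem_Ico]
    constructor
    · rintro h k ⟨hk1, hk2⟩
      have hlt : k - b < s := by omega
      have := h ⟨k - b, hlt⟩
      rw [hB'']
      dsimp only
      rw [dif_pos hlt]
      have hkb : b + (k - b) = k := by omega
      rwa [hkb] at this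
    · intro h j
      have := h (b + (j : ℕ)) ⟨by omega, by omega⟩
      have hjb : b + (j : ℕ) - b = (j : ℕ) := by omega
      rw [hjb, hB''] at this
      dsimp only at this
      rwa [dif_pos j.isLt, Fin.eta] at this
  rw [hpre]
  have hsets : ∀ k ∈ Finset.Ico b (b + s),
      MeasurableSet[MeasurableSpace.comap (eta k) inferInstance] (eta k ⁻¹' (B'' (k - b))) :=
    fun k _ => ⟨B'' (k - b), hB''meas _, rfl⟩
  rw [hindep.meas_biInter hsets]
  have : ∀ k ∈ Finset.Ico b (b + s),
      μ (eta k ⁻¹' (B'' (k - b))) = Measure.map (eta 0) μ (B'' (k - b)) :=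
    fun k _ => hν k _ (hB''meas _)
  rw [Finset.prod_congr rfl this, Finset.prod_Ico_eq_prod_range]
  have hss : b + s - b = s := by omega
  rw [hss, ← Fin.prod_univ_eq_prod_range (fun t => Measure.map (eta 0) μ (B'' (b + t - b))) s]
  refine Finset.prod_congr rfl fun j _ => ?_
  have hjb : b + (j : ℕ) - b = (j : ℕ) := by omega
  rw [hjb, hB'']
  dsimp only
  rw [dif_pos j.isLt, Fin.eta]

lemma REDshift (eta : ℕ → Ω → ℝ) (hmeas : ∀ n, Measurable (eta n))
    (x0 : ℝ)
    (hmap : ∀ b s : ℕ, Measure.map (fun ω (j : Fin s) => eta (b + (j : ℕ)) ω) μ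
      = Measure.pi (fun _ : Fin s => Measure.map (eta 0) μ))
    (hU : ∀ s, MeasurableSet (REUpat x0 s))
    (i m : ℕ) (him : i ≤ m) :
    μ (REDset eta x0 i i m)
      = Measure.pi (fun _ : Fin (m - i) => Measure.map (eta 0) μ) (REUpat x0 (m - i)) := by
  have hW : Measurable (fun ω (j : Fin (m - i)) => eta (i + (j : ℕ)) ω) :=
    measurable_pi_lambda _ fun j => hmeas _
  have hpre : REDset eta x0 i i m
      = (fun ω (j : Fin (m - i)) => eta (i + (j : ℕ)) ω) ⁻¹' REUpat x0 (m - i) := by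
    ext ω
    simp only [REDset, REUpat, Set.mem_preimage, Set.mem_setOf_eq]
    constructor
    · intro h i'' h0 hle
      obtain ⟨j, hj1, hj2, hj3⟩ := h (i + i'') (by omega) (by omega)
      refine ⟨⟨j - i, by omega⟩, by simpa using by omega, ?_⟩
      have hji : i + (j - i) = j := by omega
      have hc1 : ((j - i : ℕ) : ℝ) = (j : ℝ) - (i : ℝ) := by
        have : (i : ℕ) ≤ j := hj1
        push_cast [Nat.cast_sub this]
        ring
      have hc2 : ((i + i'' : ℕ) : ℝ) = (i : ℝ) + (i'' : ℝ) := by push_cast; ring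
      simp only [hji, hc1]
      rw [hc2] at hj3
      linarith
    · intro h i' hi1 hi2
      obtain ⟨j, hj1, hj2⟩ := h (i' - i) (by omega) (by omega)
      refine ⟨i + (j : ℕ), by omega, by omega, ?_⟩
      have := hj2
      have hc1 : ((i' - i : ℕ) : ℝ) = (i' : ℝ) - (i : ℝ) := by
        push_cast [Nat.cast_sub (show i ≤ i' by omega)]
        ring
      rw [hc1] at this
      have hc2 : ((i + (j : ℕ) : ℕ) : ℝ) = (i : ℝ) + ((j : ℕ) : ℝ) := by push_cast; ring
      rw [hc2]
      linarith
  rw [hpre, ← Measure.map_apply hW (hU (m - i)), hmap i (m - i)]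

lemma REBmeasure (eta : ℕ → Ω → ℝ) (hmeas : ∀ n, Measurable (eta n))
    (hindep : iIndepFun eta μ)
    (hident : ∀ n, IdentDistrib (eta n) (eta 0) μ μ)
    (x0 : ℝ) (b i : ℕ) (hbi : b ≤ i) :
    μ (REBset eta x0 b i)
      = ∏ k ∈ Finset.range (i - b), μ {ω | eta 0 ω ≤ x0 + (k : ℝ)} := by
  classical
  have hset : REBset eta x0 b i
      = ⋂ j ∈ Finset.Ico b i, eta j ⁻¹' Set.Iic (x0 + ((i : ℝ) - 1 - (j : ℝ))) := by
    ext ω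
    simp only [REBset, Set.mem_setOf_eq, Set.mem_iInter, Finset.mem_Ico, Set.mem_preimage,
      Set.mem_Iic]
    exact ⟨fun h j hj => h j hj.1 hj.2, fun h j h1 h2 => h j ⟨h1, h2⟩⟩
  have hident' : ∀ (j : ℕ) (c : ℝ), μ (eta j ⁻¹' Set.Iic c) = μ {ω | eta 0 ω ≤ c} := by
    intro j c
    have h1 : μ (eta j ⁻¹' Set.Iic c) = Measure.map (eta j) μ (Set.Iic c) :=
      (Measure.map_apply (hmeas j) measurableSet_Iic).symm
    rw [h1, (hident j).map_eq, Measure.map_apply (hmeas 0) measurableSet_Iic]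
    rfl
  rw [hset, hindep.meas_biInter (fun j _ => ⟨_, measurableSet_Iic, rfl⟩)]
  rw [Finset.prod_congr rfl fun j _ => hident' j _]
  rw [Finset.prod_Ico_eq_prod_range]
  rw [← Finset.prod_range_reflect (fun k => μ {ω | eta 0 ω ≤ x0 + (k : ℝ)}) (i - b)]
  refine Finset.prod_congr rfl fun t ht => ?_
  rw [Finset.mem_range] at ht
  congr 1
  have hc : ((i - b - 1 - t : ℕ) : ℝ) = (i : ℝ) - 1 - ((b : ℝ) + (t : ℝ)) := by
    have h2 : i - b - 1 - t + (b + t + 1) = i := by omega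
    have h3 := congrArg (fun k : ℕ => (k : ℝ)) h2
    push_cast at h3
    linarith
  rw [hc]
  norm_num [Nat.cast_add]

lemma REindep (eta : ℕ → Ω → ℝ) (hmeas : ∀ n, Measurable (eta n))
    (hindep : iIndepFun eta μ)
    (x0 : ℝ) (b i m : ℕ) (hbi : b ≤ i) (him : i ≤ m) :
    μ (REBset eta x0 b i ∩ REDset eta x0 i i m)
      = μ (REBset eta x0 b i) * μ (REDset eta x0 i i m) := by
  classical
  set S := Finset.Ico b i with hS
  set T := Finset.Ico i m with hT
  have hIF := hindep.indepFun_finset S T (Finset.Ico_disjoint_Ico_consecutive b i m) hmeas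
  rw [indepFun_iff_measure_inter_preimage_eq_mul] at hIF
  set BP : Set ((_ : S) → ℝ) :=
    {y | ∀ j : S, y j ≤ x0 + ((i : ℝ) - 1 - (((j : ℕ)) : ℝ))} with hBP
  set DP : Set ((_ : T) → ℝ) :=
    {y | ∀ i', i < i' → i' ≤ m →
      ∃ j : T, ((j : ℕ) < i') ∧ x0 + ((i' : ℝ) - 1 - (((j : ℕ)) : ℝ)) < y j} with hDP
  have hBPm : MeasurableSet BP := by
    have : BP = ⋂ j : S, {y : (_ : S) → ℝ | y j ≤ x0 + ((i : ℝ) - 1 - (((j : ℕ)) : ℝ))} := by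
      ext y; simp [hBP, Set.mem_iInter]
    rw [this]
    exact MeasurableSet.iInter fun j => measurableSet_le (measurable_pi_apply j) measurable_const
  have hDPm : MeasurableSet DP := by
    have : DP = ⋂ i', ⋂ (_ : i < i' ∧ i' ≤ m), ⋃ j : T, ⋃ (_ : (j : ℕ) < i'),
        {y : (_ : T) → ℝ | x0 + ((i' : ℝ) - 1 - (((j : ℕ)) : ℝ)) < y j} := by
      ext y
      simp only [hDP, Set.mem_setOf_eq, Set.mem_iInter, Set.mem_iUnion, Set.mem_setOf_eq]
      constructor
      · rintro h i' ⟨h1, h2⟩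
        obtain ⟨j, hj1, hj2⟩ := h i' h1 h2
        exact ⟨j, hj1, hj2⟩
      · rintro h i' h1 h2
        obtain ⟨j, hj1, hj2⟩ := h i' ⟨h1, h2⟩
        exact ⟨j, hj1, hj2⟩
    rw [this]
    exact MeasurableSet.iInter fun i' => MeasurableSet.iInter fun _ => MeasurableSet.iUnion
      fun j => MeasurableSet.iUnion fun _ =>
        measurableSet_lt measurable_const (measurable_pi_apply j)
  have h1 : REBset eta x0 b i = (fun a (j : S) => eta j a) ⁻¹' BP := by
    ext ω
    simp only [REBset, Set.mem_setOf_eq, Set.mem_preimage, hBP]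
    constructor
    · intro h j
      have hj := Finset.mem_Ico.mp j.2
      exact h j hj.1 hj.2
    · intro h j hj1 hj2
      exact h ⟨j, Finset.mem_Ico.mpr ⟨hj1, hj2⟩⟩
  have h2 : REDset eta x0 i i m = (fun a (j : T) => eta j a) ⁻¹' DP := by
    ext ω
    simp only [REDset, Set.mem_setOf_eq, Set.mem_preimage, hDP]
    constructor
    · intro h i' hi1 hi2
      obtain ⟨j, hj1, hj2, hj3⟩ := h i' hi1 hi2
      exact ⟨⟨j, Finset.mem_Ico.mpr ⟨hj1, by omega⟩⟩, hj2, hj3⟩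
    · intro h i' hi1 hi2
      obtain ⟨j, hj1, hj2⟩ := h i' hi1 hi2
      have hj := Finset.mem_Ico.mp j.2
      exact ⟨j, hj.1, hj1, hj2⟩
  rw [h1, h2]
  exact hIF BP DP hBPm hDPm

lemma REdecomp (eta : ℕ → Ω → ℝ) (x0 : ℝ)
    (hDm : ∀ b a m : ℕ, MeasurableSet (REDset eta x0 b a m))
    (hBm : ∀ b i : ℕ, MeasurableSet (REBset eta x0 b i))
    (b a m : ℕ) (hba : b ≤ a) :
    μ (REDset eta x0 b a m)
      + ∑ i ∈ Finset.Icc (a + 1) m, μ (REBset eta x0 b i ∩ REDset eta x0 i i m) = 1 := by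
  classical
  set F : ℕ → Set Ω := fun i => REBset eta x0 b i ∩ REDset eta x0 i i m with hF
  have hFmeas : ∀ i, MeasurableSet (F i) := fun i => (hBm b i).inter (hDm i i m)
  have hkey : ∀ (i i' : ℕ) (ω : Ω), b ≤ i → i < i' → i' ≤ m →
      ω ∈ REDset eta x0 i i m → ω ∈ REBset eta x0 b i' → False := by
    intro i i' ω hbi hii' hi'm hD hB
    obtain ⟨j, hj1, hj2, hj3⟩ := hD i' hii' hi'm
    exact absurd hj3 (not_lt.mpr (hB j (le_trans hbi hj1) hj2))
  have hpd : Set.PairwiseDisjoint (↑(Finset.Icc (a + 1) m)) F := by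
    intro i hi i' hi' hne
    rw [Finset.coe_Icc, Set.mem_Icc] at hi hi'
    rcases Ne.lt_or_gt hne with h | h
    · exact Set.disjoint_left.mpr fun ω h1 h2 =>
        hkey i i' ω (by omega) h (by omega) h1.2 h2.1
    · exact Set.disjoint_left.mpr fun ω h1 h2 =>
        hkey i' i ω (by omega) h (by omega) h2.2 h1.1
  have hdd : Disjoint (REDset eta x0 b a m) (⋃ i ∈ Finset.Icc (a + 1) m, F i) := by
    simp only [Set.disjoint_iUnion_right]
    intro i hi
    rw [Finset.mem_Icc] at hi
    refine Set.disjoint_left.mpr fun ω hD hFi => ?_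
    obtain ⟨j, hj1, hj2, hj3⟩ := hD i (by omega) hi.2
    exact absurd hj3 (not_lt.mpr (hFi.1 j hj1 hj2))
  have hcover : REDset eta x0 b a m ∪ ⋃ i ∈ Finset.Icc (a + 1) m, F i = Set.univ := by
    rw [Set.eq_univ_iff_forall]
    intro ω
    by_cases hω : ω ∈ REDset eta x0 b a m
    · exact Set.mem_union_left _ hω
    · refine Set.mem_union_right _ ?_
      simp only [REDset, Set.mem_setOf_eq] at hω
      push_neg at hω
      obtain ⟨i₀, hi₀a, hi₀m, hi₀B⟩ := hω
      set P : ℕ → Prop :=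
        fun i => a < i ∧ ∀ j, b ≤ j → j < i → eta j ω ≤ x0 + ((i : ℝ) - 1 - (j : ℝ)) with hP
      haveI : DecidablePred P := Classical.decPred P
      set i1 := Nat.findGreatest P m with hi1
      have hPi₀ : P i₀ := ⟨hi₀a, hi₀B⟩
      have hi1P : P i1 := Nat.findGreatest_spec hi₀m hPi₀
      have hi1m : i1 ≤ m := Nat.findGreatest_le m
      have hi1a : a < i1 := hi1P.1
      refine Set.mem_biUnion (Finset.mem_Icc.mpr ⟨by omega, hi1m⟩) ⟨hi1P.2, ?_⟩
      intro i' hi' hi'm2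
      have hnP : ¬ P i' := Nat.findGreatest_is_greatest hi' hi'm2
      have hex : ∃ j, b ≤ j ∧ j < i' ∧ x0 + ((i' : ℝ) - 1 - (j : ℝ)) < eta j ω := by
        by_contra hc
        push_neg at hc
        exact hnP ⟨by omega, hc⟩
      obtain ⟨j, hjb, hji', hjgt⟩ := hex
      refine ⟨j, ?_, hji', hjgt⟩
      by_contra hji1
      push_neg at hji1
      have hle := hi1P.2 j hjb hji1
      have hcast : (i1 : ℝ) + 1 ≤ (i' : ℝ) := by exact_mod_cast hi'
      linarith
  have hmU : MeasurableSet (⋃ i ∈ Finset.Icc (a + 1) m, F i) :=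
    Finset.measurableSet_biUnion _ fun i _ => hFmeas i
  have h1 : μ (REDset eta x0 b a m ∪ ⋃ i ∈ Finset.Icc (a + 1) m, F i) = 1 := by
    rw [hcover]
    exact measure_univ
  rw [measure_union hdd hmU, measure_biUnion_finset hpd fun i _ => hFmeas i] at h1
  exact h1

/-- The purely real-analytic part: solving the discrete renewal equation. -/
lemma REanalysis (L : ℝ) (hLpos : 0 < L) (p : ℕ → ℝ)
    (hL : Tendsto (fun N : ℕ => ∏ k ∈ Finset.range N, p k) atTop (nhds L))
    (hp0 : ∀ k, 0 ≤ p k) (hp1 : ∀ k, p k ≤ 1)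
    (u : ℕ → ℝ) (hu0 : ∀ s, 0 ≤ u s)
    (hu_eq : ∀ m, u m = 1 - ∑ i ∈ Finset.Icc 1 m, (∏ k ∈ Finset.range i, p k) * u (m - i))
    (n : ℕ) (t : ℕ → ℝ)
    (ht : ∀ m, t m = 1 - ∑ i ∈ Finset.Icc (n+1) m, (∏ k ∈ Finset.range i, p k) * u (m - i)) :
    ∑' m : ℕ, t m = (1 + ∑ j ∈ Finset.Icc 1 n, ∏ k ∈ Finset.range j, p k) / L := by
  classical
  set π : ℕ → ℝ := fun j => ∏ k ∈ Finset.range j, p k with hπ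
  have hπ0 : ∀ j, 0 ≤ π j := fun j => Finset.prod_nonneg fun k _ => hp0 k
  have hπ1 : ∀ j, π j ≤ 1 := fun j =>
    Finset.prod_le_one (fun k _ => hp0 k) (fun k _ => hp1 k)
  have hπanti : Antitone π := by
    apply antitone_nat_of_succ_le
    intro j
    rw [hπ]
    simp only [Finset.prod_range_succ]
    calc (∏ k ∈ Finset.range j, p k) * p (j+1-1) ≤ (∏ k ∈ Finset.range j, p k) * 1 := by
          apply mul_le_mul_of_nonneg_left (hp1 _) (Finset.prod_nonneg fun k _ => hp0 k)
      _ = ∏ k ∈ Finset.range j, p k := mul_one _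
  have hπL : ∀ j, L ≤ π j := by
    intro j
    refine le_of_tendsto hL (Filter.eventually_atTop.mpr ⟨j, fun N hN => hπanti hN⟩)
  have hπzero : π 0 = 1 := by simp [hπ]
  have hone : ∀ m, ∑ i ∈ Finset.range (m+1), π i * u (m - i) = 1 := by
    intro m
    rw [Finset.sum_range_succ']
    have h1 : ∑ i ∈ Finset.range m, π (i+1) * u (m - (i+1))
        = ∑ i ∈ Finset.Icc 1 m, π i * u (m - i) := by
      rw [← Finset.Ico_add_one_right_eq_Icc, Finset.sum_Ico_eq_sum_range]
      refine Finset.sum_congr (by norm_num) fun i _ => by rw [Nat.add_comm 1 i]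
    rw [h1, hπzero, Nat.sub_zero, one_mul]
    have := hu_eq m
    linarith
  have hone' : ∀ m, ∑ s ∈ Finset.range (m+1), π (m - s) * u s = 1 := by
    intro m
    rw [← hone m, ← Finset.sum_range_reflect (fun i => π i * u (m - i)) (m+1)]
    refine Finset.sum_congr rfl fun s hs => ?_
    rw [Finset.mem_range] at hs
    have h1 : m + 1 - 1 - s = m - s := by omega
    have h2 : m - (m - s) = s := by omega
    rw [h1, h2]
  have hpart : ∀ m, ∑ s ∈ Finset.range m, u s ≤ 1 / L := by
    intro m
    match m with
    | 0 => simp; positivity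
    | m' + 1 =>
      have e1 := hone' m'
      have e2 : L * ∑ s ∈ Finset.range (m'+1), u s ≤ 1 := by
        rw [Finset.mul_sum]
        rw [← e1]
        exact Finset.sum_le_sum fun s _ => mul_le_mul_of_nonneg_right (hπL _) (hu0 s)
      rw [le_div_iff₀ hLpos, mul_comm]
      exact e2
  have hsumu : Summable u := summable_of_sum_range_le hu0 hpart
  set U := ∑' s, u s with hUdef
  have hUle : U ≤ 1 / L := Real.tsum_le_of_sum_range_le hu0 hpart
  have hpartU : ∀ m, ∑ s ∈ Finset.range m, u s ≤ U :=
    fun m => Summable.sum_le_tsum (Finset.range m) (fun s _ => hu0 s) hsumu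
  have hUK : ∀ K, 1 ≤ π K * U := by
    intro K
    have h1 : Tendsto (fun t : ℕ => ∑ s ∈ Finset.range t, u s) atTop (nhds U) :=
      hsumu.hasSum.tendsto_sum_nat
    have h2 : Tendsto (fun m : ℕ => m - K + 1) atTop atTop :=
      tendsto_atTop_atTop.mpr fun b => ⟨b + K, fun m hm => by omega⟩
    have h3 : Tendsto (fun m : ℕ => ∑ s ∈ Finset.range (m - K + 1), u s) atTop (nhds U) :=
      h1.comp h2
    have h4 : Tendsto
        (fun m : ℕ => π K * U + (U - ∑ s ∈ Finset.range (m - K + 1), u s))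
        atTop (nhds (π K * U)) := by
      have := (tendsto_const_nhds (x := U) (f := atTop (α := ℕ))).sub h3
      have := (tendsto_const_nhds (x := π K * U) (f := atTop (α := ℕ))).add this
      simpa using this
    refine ge_of_tendsto h4 (Filter.eventually_atTop.mpr ⟨K, fun m hm => ?_⟩)
    have e1 := hone' m
    have hsplit : ∑ s ∈ Finset.range (m+1), π (m - s) * u s
        = (∑ s ∈ Finset.range (m - K + 1), π (m - s) * u s)
          + ∑ s ∈ Finset.Ico (m - K + 1) (m+1), π (m - s) * u s := by
      have h5 := Finset.sum_Ico_consecutive (fun s => π (m - s) * u s)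
        (Nat.zero_le (m - K + 1)) (show m - K + 1 ≤ m + 1 by omega)
      rw [← Finset.range_eq_Ico, ← Finset.range_eq_Ico] at h5
      exact h5.symm
    have hb1 : ∑ s ∈ Finset.range (m - K + 1), π (m - s) * u s ≤ π K * U := by
      calc ∑ s ∈ Finset.range (m - K + 1), π (m - s) * u s
          ≤ ∑ s ∈ Finset.range (m - K + 1), π K * u s := by
            refine Finset.sum_le_sum fun s hs => ?_
            rw [Finset.mem_range] at hs
            exact mul_le_mul_of_nonneg_right (hπanti (by omega)) (hu0 s)
        _ = π K * ∑ s ∈ Finset.range (m - K + 1), u s := by rw [Finset.mul_sum]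
        _ ≤ π K * U := mul_le_mul_of_nonneg_left (hpartU _) (hπ0 K)
    have hb2 : ∑ s ∈ Finset.Ico (m - K + 1) (m+1), π (m - s) * u s
        ≤ U - ∑ s ∈ Finset.range (m - K + 1), u s := by
      calc ∑ s ∈ Finset.Ico (m - K + 1) (m+1), π (m - s) * u s
          ≤ ∑ s ∈ Finset.Ico (m - K + 1) (m+1), u s := by
            refine Finset.sum_le_sum fun s _ => ?_
            exact mul_le_of_le_one_left (hu0 s) (hπ1 _)
        _ = ∑ s ∈ Finset.range (m+1), u s - ∑ s ∈ Finset.range (m - K + 1), u s := by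
            rw [Finset.sum_Ico_eq_sub _ (by omega)]
        _ ≤ U - ∑ s ∈ Finset.range (m - K + 1), u s := by
            have := hpartU (m+1)
            linarith
    linarith
  have h1LU : 1 ≤ L * U :=
    ge_of_tendsto (hL.mul_const U) (Filter.Eventually.of_forall hUK)
  have hLU : L * U = 1 := by
    have hUL : U * L ≤ 1 := (le_div_iff₀ hLpos).mp hUle
    rw [mul_comm] at hUL
    linarith
  have hUval : U = 1 / L := eq_one_div_of_mul_eq_one_left (by rw [mul_comm] at hLU; exact hLU)
  set g : ℕ → ℕ → ℝ := fun i m => if i ≤ m then π i * u (m - i) else 0 with hg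
  have hform : ∀ m, t m = ∑ i ∈ Finset.range (n+1), g i m := by
    intro m
    rw [ht m]
    by_cases hnm : n ≤ m
    · have e1 : ∑ i ∈ Finset.range (n+1), g i m = ∑ i ∈ Finset.range (n+1), π i * u (m - i) :=
        Finset.sum_congr rfl fun i hi => by
          rw [Finset.mem_range] at hi
          exact if_pos (by omega)
      have e2 : ∑ i ∈ Finset.range (m+1), π i * u (m - i)
          = (∑ i ∈ Finset.range (n+1), π i * u (m - i))
            + ∑ i ∈ Finset.Icc (n+1) m, π i * u (m - i) := by
        have h5 := Finset.sum_Ico_consecutive (fun i => π i * u (m - i))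
          (Nat.zero_le (n + 1)) (show n + 1 ≤ m + 1 by omega)
        rw [← Finset.range_eq_Ico, ← Finset.range_eq_Ico, Finset.Ico_add_one_right_eq_Icc] at h5
        exact h5.symm
      have e3 := hone m
      rw [e1]
      rw [e2] at e3
      linarith
    · push_neg at hnm
      have e0 : Finset.Icc (n+1) m = ∅ := Finset.Icc_eq_empty (by omega)
      rw [e0, Finset.sum_empty, sub_zero]
      have e1 : ∑ i ∈ Finset.range (n+1), g i m
          = (∑ i ∈ Finset.range (m+1), g i m) + ∑ i ∈ Finset.Ico (m+1) (n+1), g i m := by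
        have h5 := Finset.sum_Ico_consecutive (fun i => g i m)
          (Nat.zero_le (m + 1)) (show m + 1 ≤ n + 1 by omega)
        rw [← Finset.range_eq_Ico, ← Finset.range_eq_Ico] at h5
        exact h5.symm
      have e2 : ∑ i ∈ Finset.Ico (m+1) (n+1), g i m = 0 :=
        Finset.sum_eq_zero fun i hi => by
          rw [Finset.mem_Ico] at hi
          exact if_neg (by omega)
      have e3 : ∑ i ∈ Finset.range (m+1), g i m = ∑ i ∈ Finset.range (m+1), π i * u (m - i) :=
        Finset.sum_congr rfl fun i hi => by
          rw [Finset.mem_range] at hi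
          exact if_pos (by omega)
      rw [e1, e2, e3, add_zero, hone m]
  have hgsum : ∀ i, HasSum (g i) (π i * U) := by
    intro i
    have h0 : HasSum (fun s => π i * u s) (π i * U) := hsumu.hasSum.mul_left _
    have h1 : (fun s => g i (s + i)) = fun s => π i * u s := by
      funext s
      simp only [hg]
      rw [if_pos (by omega), Nat.add_sub_cancel]
    have h2 : HasSum (fun s => g i (s + i)) (π i * U) := by rw [h1]; exact h0
    rw [hasSum_nat_add_iff i] at h2
    have h3 : ∑ j ∈ Finset.range i, g i j = 0 :=
      Finset.sum_eq_zero fun j hj => by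
        rw [Finset.mem_range] at hj
        exact if_neg (by omega)
    rw [h3, add_zero] at h2
    exact h2
  have hT : HasSum t (∑ i ∈ Finset.range (n+1), π i * U) := by
    have := hasSum_sum (f := g) (s := Finset.range (n+1)) (a := fun i => π i * U)
      (fun i _ => hgsum i)
    have heq : (fun m => ∑ i ∈ Finset.range (n+1), g i m) = t := by
      funext m
      rw [hform m]
    rwa [heq] at this
  rw [hT.tsum_eq, ← Finset.sum_mul, hUval]
  have hsplit : ∑ i ∈ Finset.range (n+1), π i = 1 + ∑ j ∈ Finset.Icc 1 n, π j := by
    rw [Finset.sum_range_succ']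
    have h1 : ∑ i ∈ Finset.range n, π (i+1) = ∑ j ∈ Finset.Icc 1 n, π j := by
      rw [← Finset.Ico_add_one_right_eq_Icc, Finset.sum_Ico_eq_sum_range]
      refine Finset.sum_congr (by norm_num) fun i _ => by rw [Nat.add_comm 1 i]
    rw [h1, hπzero]
    ring
  rw [hsplit, mul_one_div]

end REaux

theorem stmt_10 {Ω : Type*} [MeasurableSpace Ω] (μ : Measure Ω) [IsProbabilityMeasure μ]
    (eta : ℕ → Ω → ℝ) (hmeas : ∀ n, Measurable (eta n))
    (hindep : iIndepFun eta μ)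
    (hident : ∀ n, IdentDistrib (eta n) (eta 0) μ μ)
    (x0 : ℝ)
    (hP0 : 0 < (μ {ω | eta 0 ω ≤ x0}).toReal)
    (hP1 : (μ {ω | eta 0 ω ≤ x0}).toReal < 1)
    (hplus : Integrable (fun ω => max (eta 0 ω) 0) μ)
    (L : ℝ) (hLpos : 0 < L)
    (hL : Tendsto
      (fun N : ℕ => ∏ k ∈ Finset.range N, (μ {ω | eta 0 ω ≤ x0 + (k : ℝ)}).toReal)
      atTop (nhds L))
    (n : ℕ) (x : ℝ) (hx : x ∈ Set.Ioc (x0 + n) (x0 + n + 1))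
    (R : ℕ → Ω → ℝ)
    (hR0 : ∀ ω, R 0 ω = x)
    (hRs : ∀ m ω, R (m + 1) ω = max (R m ω - 1) (eta m ω)) :
    -- E_x[T] written via E[T] = ∑_{m≥0} P(T > m), where
    -- {T > m} = {∀ i ∈ [1,m], R i > x0}
    ∑' m : ℕ, (μ {ω | ∀ i, 1 ≤ i → i ≤ m → x0 < R i ω}).toReal
      = (1 + ∑ j ∈ Finset.Icc 1 n, ∏ k ∈ Finset.range j,
            (μ {ω | eta 0 ω ≤ x0 + (k : ℝ)}).toReal) / L := by
  classical
  have hmap := REmap μ eta hmeas hindep hident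
  have hDmeas := fun b a m => REDset_measurable eta hmeas x0 b a m
  have hBmeas := fun b i => REBset_measurable eta hmeas x0 b i
  have hUmeas := fun s => REUpat_measurable x0 s
  set p : ℕ → ℝ := fun k => (μ {ω | eta 0 ω ≤ x0 + (k : ℝ)}).toReal with hp
  set u : ℕ → ℝ := fun s => (μ (REDset eta x0 0 0 s)).toReal with hu
  -- shift invariance
  have hshift : ∀ i m, i ≤ m → (μ (REDset eta x0 i i m)).toReal = u (m - i) := by
    intro i m him
    rw [REDshift μ eta hmeas x0 hmap hUmeas i m him, hu]
    dsimp only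
    rw [REDshift μ eta hmeas x0 hmap hUmeas 0 (m - i) (Nat.zero_le _), Nat.sub_zero]
  have hBtoReal : ∀ b i, b ≤ i →
      (μ (REBset eta x0 b i)).toReal = ∏ k ∈ Finset.range (i - b), p k := by
    intro b i hbi
    rw [REBmeasure μ eta hmeas hindep hident x0 b i hbi, ENNReal.toReal_prod]
  -- the renewal identity
  have hrenew : ∀ b a m : ℕ, b ≤ a →
      (μ (REDset eta x0 b a m)).toReal
        = 1 - ∑ i ∈ Finset.Icc (a+1) m, (∏ k ∈ Finset.range (i - b), p k) * u (m - i) := by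
    intro b a m hba
    have h := REdecomp μ eta x0 hDmeas hBmeas b a m hba
    have hfin : ∀ s : Set Ω, μ s ≠ ⊤ := fun s => measure_ne_top μ s
    have h2 := congrArg ENNReal.toReal h
    rw [ENNReal.toReal_add (hfin _) (ENNReal.sum_ne_top.mpr fun i _ => hfin _),
      ENNReal.toReal_sum (fun i _ => hfin _), ENNReal.toReal_one] at h2
    have h3 : ∀ i ∈ Finset.Icc (a+1) m,
        (μ (REBset eta x0 b i ∩ REDset eta x0 i i m)).toReal
          = (∏ k ∈ Finset.range (i - b), p k) * u (m - i) := by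
      intro i hi
      rw [Finset.mem_Icc] at hi
      rw [REindep μ eta hmeas hindep x0 b i m (by omega) hi.2, ENNReal.toReal_mul,
        hBtoReal b i (by omega), hshift i m hi.2]
    rw [Finset.sum_congr rfl h3] at h2
    linarith
  have hu_eq : ∀ m, u m = 1 - ∑ i ∈ Finset.Icc 1 m, (∏ k ∈ Finset.range i, p k) * u (m - i) := by
    intro m
    have h := hrenew 0 0 m le_rfl
    simpa using h
  -- the hitting-time event equals `REDset eta x0 0 n m`
  have hRiff : ∀ (i : ℕ) (ω : Ω) (t : ℝ),
      t < R i ω ↔ t < x - i ∨ ∃ j, j < i ∧ t + ((i : ℝ) - 1 - (j : ℝ)) < eta j ω := by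
    intro i
    induction i with
    | zero =>
      intro ω t
      simp [hR0]
    | succ i ih =>
      intro ω t
      rw [hRs i ω, lt_max_iff]
      have h1 : t < R i ω - 1 ↔ t + 1 < R i ω := by constructor <;> intro <;> linarith
      rw [h1, ih ω (t + 1)]
      constructor
      · rintro ((h | ⟨j, hj, hgt⟩) | h)
        · left; push_cast; linarith
        · right
          exact ⟨j, by omega, by push_cast at hgt ⊢; linarith⟩
        · right
          exact ⟨i, by omega, by push_cast; linarith⟩
      · rintro (h | ⟨j, hj, hgt⟩)
        · left; left; push_cast at h ⊢; linarith
        · rcases Nat.lt_succ_iff_lt_or_eq.mp hj with hj' | rfl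
          · left; right
            exact ⟨j, hj', by push_cast at hgt ⊢; linarith⟩
          · right; push_cast at hgt; linarith
  have hsetEq : ∀ m, {ω | ∀ i, 1 ≤ i → i ≤ m → x0 < R i ω} = REDset eta x0 0 n m := by
    intro m
    ext ω
    simp only [Set.mem_setOf_eq, REDset]
    constructor
    · intro h i hn hi
      have h1 : 1 ≤ i := by omega
      rcases (hRiff i ω x0).mp (h i h1 hi) with hlt | ⟨j, hj, hgt⟩
      · exfalso
        have hc : (n : ℝ) + 1 ≤ (i : ℝ) := by exact_mod_cast hn
        have := hx.2
        linarith
      · exact ⟨j, Nat.zero_le j, hj, hgt⟩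
    · intro h i h1 hi
      rw [hRiff]
      by_cases hin : i ≤ n
      · left
        have hc : (i : ℝ) ≤ (n : ℝ) := by exact_mod_cast hin
        have := hx.1
        linarith
      · obtain ⟨j, _, hj, hgt⟩ := h i (by omega) hi
        exact Or.inr ⟨j, hj, hgt⟩
  have ht : ∀ m, (μ {ω | ∀ i, 1 ≤ i → i ≤ m → x0 < R i ω}).toReal
      = 1 - ∑ i ∈ Finset.Icc (n+1) m, (∏ k ∈ Finset.range i, p k) * u (m - i) := by
    intro m
    rw [hsetEq m]
    have h := hrenew 0 n m (Nat.zero_le n)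
    simpa using h
  -- nonnegativity and boundedness
  have hp0 : ∀ k, 0 ≤ p k := fun k => ENNReal.toReal_nonneg
  have hp1 : ∀ k, p k ≤ 1 := by
    intro k
    rw [hp]
    have := prob_le_one (μ := μ) (s := {ω | eta 0 ω ≤ x0 + (k : ℝ)})
    simpa using ENNReal.toReal_mono (by simp) this
  have hu0 : ∀ s, 0 ≤ u s := fun s => ENNReal.toReal_nonneg
  exact REanalysis L hLpos p hL hp0 hp1 u hu0 hu_eq n _ ht
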